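/- Let $a_l, a_0 \in \mathbb{R}$ with $a_l + a_0 > 0$ and $a_l a_0 < 0$, and $l > 0$. Let $(\lambda(s))_{s > 0}$ be a family of complex numbers, bounded with bounded imaginary part, satisfying $\mathrm{Re}(\lambda(s)) > \pi/l$ for all $s$ and $(\lambda(s) - s a_l)(\lambda(s) - s a_0) e^{2 i \lambda(s) l} = (\lambda(s) + s a_l)(\lambda(s) + s a_0)$. Then for all sufficiently large $s$, $\mathrm{Im}(\lambda(s)) > 0$. -/

import Mathlib

set_option maxHeartbeats 1000000 in
/-- For `a_l + a_0 > 0`, `a_l a_0 < 0`, a bounded family `λ(s)` of solutions of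
`(λ - s a_l)(λ - s a_0) e^{2iλl} = (λ + s a_l)(λ + s a_0)` with
`Re λ(s) > π/l` has `Im λ(s) > 0` for all sufficiently large `s`. -/
theorem eigenvalues_move_up_for_large_dissipation
    (l al a0 : ℝ) (hl : 0 < l) (hsum : 0 < al + a0) (hprod : al * a0 < 0)
    (lam : ℝ → ℂ)
    (hbd : ∃ M : ℝ, ∀ s > (0:ℝ), ‖lam s‖ ≤ M)
    (hre : ∀ s > (0:ℝ), Real.pi / l < (lam s).re)
    (heq : ∀ s > (0:ℝ),
      (lam s - (s : ℂ) * (al : ℂ)) * (lam s - (s : ℂ) * (a0 : ℂ)) *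
          Complex.exp (2 * Complex.I * lam s * (l : ℂ))
        = (lam s + (s : ℂ) * (al : ℂ)) * (lam s + (s : ℂ) * (a0 : ℂ))) :
    ∃ S : ℝ, ∀ s ≥ S, 0 < (lam s).im := by
  obtain ⟨M, hM⟩ := hbd
  have hc : 0 < -(al * a0) := by linarith
  have hsqc : 0 < Real.sqrt (-(al * a0)) := Real.sqrt_pos.mpr hc
  refine ⟨max 1 ((M + 1) / Real.sqrt (-(al * a0))), fun s hs => ?_⟩
  have hs1 : (1 : ℝ) ≤ s := le_trans (le_max_left _ _) hs
  have hs0 : (0 : ℝ) < s := by linarith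
  have hMle : ‖lam s‖ ≤ M := hM s hs0
  have hM0 : 0 ≤ M := le_trans (norm_nonneg _) hMle
  have h2 : (M + 1) / Real.sqrt (-(al * a0)) ≤ s := le_trans (le_max_right _ _) hs
  have h3 : M + 1 ≤ s * Real.sqrt (-(al * a0)) := by
    rw [div_le_iff₀ hsqc] at h2; linarith
  have hsq : Real.sqrt (-(al * a0)) ^ 2 = -(al * a0) := Real.sq_sqrt hc.le
  have h4 : M ^ 2 < s ^ 2 * (-(al * a0)) := by
    have h5 : (M + 1) ^ 2 ≤ (s * Real.sqrt (-(al * a0))) ^ 2 :=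
      pow_le_pow_left₀ (by linarith) h3 2
    nlinarith
  set z := lam s with hz
  have hx : Real.pi / l < z.re := hre s hs0
  have hxpos : 0 < z.re := lt_trans (div_pos Real.pi_pos hl) hx
  have habs : z.re ^ 2 + z.im ^ 2 ≤ M ^ 2 := by
    have h6 : Complex.normSq z ≤ M ^ 2 := by
      rw [← Complex.sq_norm]
      exact pow_le_pow_left₀ (norm_nonneg _) hMle 2
    have h7 : Complex.normSq z = z.re ^ 2 + z.im ^ 2 := by
      rw [Complex.normSq_apply]; ring
    linarith
  have e1 : Complex.normSq ((z + (s : ℂ) * (al : ℂ)) * (z + (s : ℂ) * (a0 : ℂ)))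
      = ((z.re + s * al) ^ 2 + z.im ^ 2) * ((z.re + s * a0) ^ 2 + z.im ^ 2) := by
    rw [map_mul]
    simp [Complex.normSq_apply, Complex.add_re, Complex.add_im, Complex.mul_re,
      Complex.mul_im]
    ring
  have e2 : Complex.normSq ((z - (s : ℂ) * (al : ℂ)) * (z - (s : ℂ) * (a0 : ℂ)))
      = ((z.re - s * al) ^ 2 + z.im ^ 2) * ((z.re - s * a0) ^ 2 + z.im ^ 2) := by
    rw [map_mul]
    simp [Complex.normSq_apply, Complex.sub_re, Complex.sub_im, Complex.mul_re,
      Complex.mul_im]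
    ring
  have hkey : Complex.normSq ((z + (s : ℂ) * (al : ℂ)) * (z + (s : ℂ) * (a0 : ℂ)))
      < Complex.normSq ((z - (s : ℂ) * (al : ℂ)) * (z - (s : ℂ) * (a0 : ℂ))) := by
    rw [e1, e2]
    have hfac : ((z.re - s * al) ^ 2 + z.im ^ 2) * ((z.re - s * a0) ^ 2 + z.im ^ 2)
        - ((z.re + s * al) ^ 2 + z.im ^ 2) * ((z.re + s * a0) ^ 2 + z.im ^ 2)
        = 4 * s * z.re * (al + a0) * (s ^ 2 * (-(al * a0)) - (z.re ^ 2 + z.im ^ 2)) := by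
      ring
    nlinarith [mul_pos (mul_pos (mul_pos (mul_pos (by norm_num : (0:ℝ) < 4) hs0) hxpos) hsum)
      (by linarith : (0:ℝ) < s ^ 2 * (-(al * a0)) - (z.re ^ 2 + z.im ^ 2))]
  have hYX : ‖(z + (s : ℂ) * (al : ℂ)) * (z + (s : ℂ) * (a0 : ℂ))‖
      < ‖(z - (s : ℂ) * (al : ℂ)) * (z - (s : ℂ) * (a0 : ℂ))‖ := by
    rw [← Complex.sq_norm, ← Complex.sq_norm] at hkey
    nlinarith [norm_nonneg ((z + (s : ℂ) * (al : ℂ)) * (z + (s : ℂ) * (a0 : ℂ))),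
      norm_nonneg ((z - (s : ℂ) * (al : ℂ)) * (z - (s : ℂ) * (a0 : ℂ)))]
  have hre2 : (2 * Complex.I * z * (l : ℂ)).re = -(2 * l * z.im) := by
    simp [Complex.mul_re, Complex.mul_im]
    ring
  have habseq : ‖(z - (s : ℂ) * (al : ℂ)) * (z - (s : ℂ) * (a0 : ℂ))‖
      * Real.exp (-(2 * l * z.im))
      = ‖(z + (s : ℂ) * (al : ℂ)) * (z + (s : ℂ) * (a0 : ℂ))‖ := by
    have h8 := congrArg (fun x : ℂ => ‖x‖) (heq s hs0)
    rwa [norm_mul, Complex.norm_exp, hre2] at h8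
  have hX0 : 0 < ‖(z - (s : ℂ) * (al : ℂ)) * (z - (s : ℂ) * (a0 : ℂ))‖ :=
    lt_of_le_of_lt (norm_nonneg _) hYX
  have hexp : Real.exp (-(2 * l * z.im)) < 1 := by
    have h9 : ‖(z - (s : ℂ) * (al : ℂ)) * (z - (s : ℂ) * (a0 : ℂ))‖
        * Real.exp (-(2 * l * z.im))
        < ‖(z - (s : ℂ) * (al : ℂ)) * (z - (s : ℂ) * (a0 : ℂ))‖ * 1 := by
      rw [habseq, mul_one]; exact hYX
    exact lt_of_mul_lt_mul_left h9 hX0.le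
  have h10 : -(2 * l * z.im) < 0 := Real.exp_lt_one_iff.mp hexp
  nlinarith
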